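/- If there exists a constant B ≥ 1 such that for all m ≥ n, x* ∈ X*: Σ_{k=n}^m ‖(A_m^k)* x*‖ ≤ B ‖x*‖, then (m-n+1)‖(A_m^n)* x*‖ ≤ B² ‖x*‖ for all m ≥ n and x* ∈ X*. -/

import Mathlib

open scoped BigOperators

/-- The evolution operator `A_m^n = A(m) ∘ ⋯ ∘ A(n+1)`, with `A_n^n = 1`. -/
noncomputable def evol {X : Type*} [NormedAddCommGroup X] [NormedSpace ℝ X]
    (A : ℕ → X →L[ℝ] X) (m n : ℕ) : X →L[ℝ] X :=
  ((List.range (m - n)).map (fun k => A (n + k + 1))).foldl (fun P B => B ∘L P) 1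

lemma evol_succ {X : Type*} [NormedAddCommGroup X] [NormedSpace ℝ X]
    (A : ℕ → X →L[ℝ] X) {n m : ℕ} (h : n ≤ m) :
    evol A (m + 1) n = (A (m + 1)) ∘L evol A m n := by
  unfold evol
  rw [Nat.succ_sub h, List.range_succ, List.map_append, List.foldl_append]
  simp only [List.map_cons, List.map_nil, List.foldl_cons, List.foldl_nil]
  congr 2
  omega

lemma evol_comp {X : Type*} [NormedAddCommGroup X] [NormedSpace ℝ X]
    (A : ℕ → X →L[ℝ] X) {n k m : ℕ} (hnk : n ≤ k) (hkm : k ≤ m) :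
    evol A m n = (evol A m k) ∘L (evol A k n) := by
  induction m, hkm using Nat.le_induction with
  | base =>
    have : evol A k k = 1 := by simp [evol]
    rw [this]
    ext x; simp
  | succ m hkm ih =>
    rw [evol_succ A (hnk.trans hkm), ih, evol_succ A hkm]
    ext x; simp

theorem stmt7 {X : Type*} [NormedAddCommGroup X] [NormedSpace ℝ X] [CompleteSpace X]
    (A : ℕ → X →L[ℝ] X) (B : ℝ) (hB : 1 ≤ B)
    (h : ∀ n m : ℕ, n ≤ m → ∀ xs : X →L[ℝ] ℝ,
      ∑ k ∈ Finset.Icc n m, ‖xs.comp (evol A m k)‖ ≤ B * ‖xs‖) :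
    ∀ n m : ℕ, n ≤ m → ∀ xs : X →L[ℝ] ℝ,
      ((m : ℝ) - n + 1) * ‖xs.comp (evol A m n)‖ ≤ B ^ 2 * ‖xs‖ := by
  -- single term bound
  have hsingle : ∀ n m : ℕ, n ≤ m → ∀ xs : X →L[ℝ] ℝ,
      ‖xs.comp (evol A m n)‖ ≤ B * ‖xs‖ := by
    intro n m hnm xs
    refine le_trans ?_ (h n m hnm xs)
    exact Finset.single_le_sum (f := fun k => ‖xs.comp (evol A m k)‖)
      (fun i _ => norm_nonneg _) (Finset.mem_Icc.mpr ⟨le_refl n, hnm⟩)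
  intro n m hnm xs
  have key : ∀ k ∈ Finset.Icc n m, ‖xs.comp (evol A m n)‖ ≤ B * ‖xs.comp (evol A m k)‖ := by
    intro k hk
    obtain ⟨hnk, hkm⟩ := Finset.mem_Icc.mp hk
    rw [evol_comp A hnk hkm, ← ContinuousLinearMap.comp_assoc]
    exact hsingle n k hnk (xs.comp (evol A m k))
  have hsum : ∑ k ∈ Finset.Icc n m, ‖xs.comp (evol A m n)‖ ≤
      ∑ k ∈ Finset.Icc n m, B * ‖xs.comp (evol A m k)‖ := Finset.sum_le_sum key
  rw [Finset.sum_const, ← Finset.mul_sum] at hsum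
  have hcard : ((Finset.Icc n m).card : ℝ) = (m : ℝ) - n + 1 := by
    rw [Nat.card_Icc]; push_cast [Nat.succ_sub hnm] ; push_cast [Nat.cast_sub hnm]; ring
  have h2 : B * ∑ k ∈ Finset.Icc n m, ‖xs.comp (evol A m k)‖ ≤ B * (B * ‖xs‖) := by
    exact mul_le_mul_of_nonneg_left (h n m hnm xs) (by linarith)
  calc ((m : ℝ) - n + 1) * ‖xs.comp (evol A m n)‖
      = ((Finset.Icc n m).card : ℝ) * ‖xs.comp (evol A m n)‖ := by rw [hcard]
    _ ≤ B * (B * ‖xs‖) := by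
        rw [← nsmul_eq_mul] at *
        exact le_trans (by simpa using hsum) h2
    _ = B ^ 2 * ‖xs‖ := by ring
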